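/- Let F be a complete discretely valued field, let g(T) ∈ O_F[T] be a separable monic Eisenstein polynomial, let α ∈ F^sep be a root of g, set E = F(α), and let d = v_E(g'(α)) be the E-valuation of the different of E/F. If π ∈ F^sep satisfies v_E(g(π)) > d, then g has a root β with v_E(π − β) ≥ v_E(g(π)) − d. -/

import Mathlib

open scoped LaurentSeries Multiplicative
noncomputable section

namespace FieldOfNormsPaper

abbrev Zm0 := WithZero (Multiplicative ℤ)
abbrev Qm0 := WithZero (Multiplicative ℚ)

def zToQ : Zm0 →*₀ Qm0 :=
  WithZero.map' (AddMonoidHom.toMultiplicative (Int.castAddHom ℚ))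

structure CDVF (F : Type) [Field F] where
  val : Valuation F Zm0
  isDiscrete : Function.Surjective val
  complete : @CompleteSpace F (Valued.mk' val).toUniformSpace

structure LocalFieldStr (k : Type) [Field k] (F : Type) [Field F] extends CDVF F where
  residIso : IsLocalRing.ResidueField val.valuationSubring ≃+* k

def LocalFieldStr.res {k F : Type} [Field k] [Field F] (S : LocalFieldStr k F)
    (x : F) (hx : S.val x ≤ 1) : k :=
  S.residIso (IsLocalRing.residue _ ⟨x, hx⟩)

def IsTotRam {F : Type} [Field F] (S : CDVF F) (L : Type) [Field L] [Algebra F L] : Prop :=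
  ∃ (g : Polynomial S.val.valuationSubring) (α : L),
    g.Monic ∧ g.IsEisensteinAt (IsLocalRing.maximalIdeal S.val.valuationSubring) ∧
    g.natDegree = Module.finrank F L ∧
    Polynomial.aeval α (g.map (algebraMap S.val.valuationSubring F)) = 0 ∧
    Algebra.adjoin F {α} = ⊤

structure AObj (p : ℕ) (k : Type) [Field k] where
  F : Type
  E : Type
  [fieldF : Field F]
  [fieldE : Field E]
  [alg : Algebra F E]
  base : LocalFieldStr k F
  valE : Valuation E Qm0
  val_comp : ∀ x : F, valE (algebraMap F E x) = zToQ (base.val x)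
  galois : IsGalois F E
  abelian : ∀ σ τ : E ≃ₐ[F] E, σ * τ = τ * σ
  totRam : ∀ L : IntermediateField F E, FiniteDimensional F L → IsTotRam base.toCDVF L
  infiniteIfCharZero : CharZero F → ¬ FiniteDimensional F E

attribute [instance] AObj.fieldF AObj.fieldE AObj.alg

abbrev K (k : Type) [Field k] := LaurentSeries k

variable (k : Type) [Field k]

def Tvar : K k := HahnSeries.single 1 1

def AutK : Subgroup ((K k) ≃ₐ[k] (K k)) where
  carrier := {σ | ∀ f : K k, Valued.v (σ f) = Valued.v f}
  one_mem' := fun _ => rfl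
  mul_mem' := by
    intro a b ha hb f
    have : (a * b) f = a (b f) := rfl
    rw [this, ha, hb]
  inv_mem' := by
    intro a ha f
    have : a (a⁻¹ f) = f := by
      have : a⁻¹ f = a.symm f := rfl
      rw [this]; exact a.apply_symm_apply f
    conv_rhs => rw [← this]
    rw [ha]

instance autKTop : TopologicalSpace (AutK k) :=
  TopologicalSpace.induced (fun σ => ((σ : (K k) ≃ₐ[k] (K k)) : K k → K k)) inferInstance

structure BObj where
  A : Subgroup (AutK k)
  abelian : ∀ σ τ : A, σ * τ = τ * σ
  closed : IsClosed (A : Set (AutK k))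

/-- `Sset` is a set of representatives for the cosets of `H'` in `H`. -/
def IsTransversal {G : Type} [Group G] (H H' : Subgroup G) (Sset : Finset G) : Prop :=
  (∀ s ∈ Sset, s ∈ H) ∧ ∀ τ ∈ H, ∃! s, s ∈ Sset ∧ s⁻¹ * τ ∈ H'

/-- `π` is a uniformizer of the subextension `L` with respect to the valuation `w`:
it has the largest value `< 1` among elements of `L`. -/
def IsUnifOf {F E : Type} [Field F] [Field E] [Algebra F E] (w : Valuation E Qm0)
    (L : IntermediateField F E) (π : E) : Prop :=
  π ∈ L ∧ w π ≠ 0 ∧ w π < 1 ∧ ∀ y ∈ L, w y < 1 → w y ≠ 0 → w y ≤ w π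

/-- An identification of the field of norms `X_F(E)` of a totally ramified abelian
extension `E/F` with `k((T))`.  An element `x` of `k((T))` corresponds to the
norm-compatible sequence `(comp x L)_L`, indexed by the finite subextensions `L` of
`E/F`; multiplication is componentwise, addition of integral elements is given by
the limit of the norms of the sums of the components, the distinguished uniformizer
`T` corresponds to a norm-compatible sequence of uniformizers, the Galois group acts
through `act`, and the residue field `k` is embedded via compatible `p`-power roots
of Teichmüller lifts. -/
structure NormField (k : Type) [Field k] (F E : Type) [Field F] [Field E] [Algebra F E]
    (S : LocalFieldStr k F) (w : Valuation E Qm0) where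
  /-- the component in `L` of an element of `k((T)) ≅ X_F(E)` -/
  comp : K k → IntermediateField F E → E
  comp_mem : ∀ x L, comp x L ∈ L
  comp_one : ∀ L, comp 1 L = 1
  comp_zero : ∀ L, comp 0 L = 0
  /-- multiplication is componentwise -/
  comp_mul : ∀ x y L, comp (x * y) L = comp x L * comp y L
  /-- the components form norm-compatible sequences:  the norm from `L'` to `L`
  (the product over a transversal of `Gal(E/L')` in `Gal(E/L)`) of the `L'`-component
  is the `L`-component -/
  comp_norm : ∀ (x : K k) (L L' : IntermediateField F E), L ≤ L' →
      FiniteDimensional F L' → ∀ Sset : Finset (E ≃ₐ[F] E),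
      IsTransversal L.fixingSubgroup L'.fixingSubgroup Sset →
      (∏ s ∈ Sset, s (comp x L')) = comp x L
  /-- an element of `X_F(E)` is determined by its components -/
  comp_inj : ∀ x y : K k, (∀ L : IntermediateField F E, FiniteDimensional F L → comp x L = comp y L) → x = y
  /-- every integral norm-compatible sequence arises from an element -/
  comp_surj : ∀ c : IntermediateField F E → E,
      (∀ L : IntermediateField F E, FiniteDimensional F L → c L ∈ L ∧ w (c L) ≤ 1) →
      (∀ (L L' : IntermediateField F E), L ≤ L' → FiniteDimensional F L' →
        ∀ Sset : Finset (E ≃ₐ[F] E),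
        IsTransversal L.fixingSubgroup L'.fixingSubgroup Sset →
        (∏ s ∈ Sset, s (c L')) = c L) →
      ∃ x : K k, Valued.v x ≤ (1 : Zm0) ∧ ∀ L : IntermediateField F E, FiniteDimensional F L → comp x L = c L
  /-- addition: the `L`-component of `x + y` is the limit over `L'` of the norms of
  the sums of the `L'`-components of `x` and `y` -/
  comp_add : ∀ x y : K k, Valued.v x ≤ (1 : Zm0) → Valued.v y ≤ (1 : Zm0) →
      ∀ L : IntermediateField F E, FiniteDimensional F L → ∀ N : ℕ,
      ∃ L₀ : IntermediateField F E, FiniteDimensional F L₀ ∧ L ≤ L₀ ∧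
        ∀ L' : IntermediateField F E, FiniteDimensional F L' → L₀ ≤ L' →
        ∀ Sset : Finset (E ≃ₐ[F] E),
        IsTransversal L.fixingSubgroup L'.fixingSubgroup Sset →
        w (comp (x + y) L - ∏ s ∈ Sset, s (comp x L' + comp y L'))
          ≤ (w (comp (Tvar k) L)) ^ N
  /-- the distinguished uniformizer `T` of `k((T))` corresponds to a compatible
  sequence of uniformizers of the finite subextensions -/
  unif : ∀ L : IntermediateField F E, FiniteDimensional F L → IsUnifOf w L (comp (Tvar k) L)
  /-- the action of `Gal(E/F)` on `X_F(E) ≅ k((T))` -/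
  act : (E ≃ₐ[F] E) →* AutK k
  /-- the action is induced by the action on the components -/
  act_compat : ∀ (σ : E ≃ₐ[F] E) (x : K k) (L : IntermediateField F E), FiniteDimensional F L →
      comp (((act σ : AutK k) : (K k) ≃ₐ[k] (K k)) x) L = σ (comp x L)
  act_inj : Function.Injective act
  act_range_closed : IsClosed ((act.range : Subgroup (AutK k)) : Set (AutK k))
  /-- the embedding of `k` in `X_F(E)` is by compatible `p`-power roots of
  Teichmüller lifts: the `L`-component of (the element corresponding to) `ζ ∈ k`,
  raised to the power `p^a` with `a = v_p([L:F])`, reduces to `ζ` in the residue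
  field -/
  teich : ∀ ζ : k, ∀ L : IntermediateField F E, FiniteDimensional F L → ∀ c : F, ∀ hc : S.val c ≤ 1,
      S.res c hc = ζ →
      w ((comp (algebraMap k (K k) ζ) L) ^
          ((ringChar k) ^ ((Module.finrank F L).factorization (ringChar k))) -
        algebraMap F E c) < 1

/-- The field-of-norms data attached to an object of `𝒜`. -/
abbrev ANorm {p : ℕ} {k : Type} [Field k] (a : AObj p k) : Type :=
  NormField k a.F a.E a.base a.valE

/-- The object `ℱ(E/F) = (X_F(E), Gal(E/F))` of `ℬ` attached to an object of `𝒜`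
with field-of-norms data. -/
def toBObj {p : ℕ} {k : Type} [Field k] (a : AObj p k) (n : ANorm a) : BObj k where
  A := n.act.range
  abelian := by
    rintro ⟨x, hx⟩ ⟨y, hy⟩
    obtain ⟨s, rfl⟩ := hx
    obtain ⟨t, rfl⟩ := hy
    refine Subtype.ext ?_
    show n.act s * n.act t = n.act t * n.act s
    rw [← map_mul, ← map_mul, a.abelian]
  closed := n.act_range_closed



/-- The lower ramification subgroup `Γ[x]` of `Γ = Aut_k(K)` for `x : ℝ`:
the set of `σ ∈ Aut_k(K)` with `v_K(σ(T) - T) ≥ x + 1`. -/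
def ramGroup (x : ℝ) : Subgroup (AutK k) where
  carrier := {σ | Valued.v (((σ : (K k) ≃ₐ[k] (K k)) (Tvar k)) - Tvar k)
      ≤ ((Multiplicative.ofAdd (-(⌈x⌉ + 1)) : Multiplicative ℤ) : Zm0)}
  one_mem' := by
    simp only [Set.mem_setOf_eq, OneMemClass.coe_one, AlgEquiv.one_apply, sub_self, map_zero]
    exact zero_le'
  mul_mem' := by
    intro a b ha hb
    simp only [Set.mem_setOf_eq] at *
    have hab : ((a * b : AutK k) : (K k) ≃ₐ[k] (K k)) (Tvar k)
        = (a : (K k) ≃ₐ[k] (K k)) ((b : (K k) ≃ₐ[k] (K k)) (Tvar k)) := rfl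
    rw [hab]
    have key : (a : (K k) ≃ₐ[k] (K k)) ((b : (K k) ≃ₐ[k] (K k)) (Tvar k)) - Tvar k
        = (a : (K k) ≃ₐ[k] (K k)) ((b : (K k) ≃ₐ[k] (K k)) (Tvar k) - Tvar k)
          + ((a : (K k) ≃ₐ[k] (K k)) (Tvar k) - Tvar k) := by
      rw [map_sub]; ring
    rw [key]
    refine le_trans (Valued.v.map_add _ _) (max_le ?_ ha)
    rw [a.2]; exact hb
  inv_mem' := by
    intro a ha
    simp only [Set.mem_setOf_eq] at *
    have h1 : (a : (K k) ≃ₐ[k] (K k)) ((a⁻¹ : AutK k).1 (Tvar k) - Tvar k)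
        = Tvar k - (a : (K k) ≃ₐ[k] (K k)) (Tvar k) := by
      rw [map_sub]
      congr 1
      exact (a : (K k) ≃ₐ[k] (K k)).apply_symm_apply (Tvar k)
    calc Valued.v ((a⁻¹ : AutK k).1 (Tvar k) - Tvar k)
        = Valued.v ((a : (K k) ≃ₐ[k] (K k)) ((a⁻¹ : AutK k).1 (Tvar k) - Tvar k)) := (a.2 _).symm
      _ = Valued.v (Tvar k - (a : (K k) ≃ₐ[k] (K k)) (Tvar k)) := by rw [h1]
      _ = Valued.v ((a : (K k) ≃ₐ[k] (K k)) (Tvar k) - Tvar k) := Valuation.map_sub_swap _ _ _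
      _ ≤ _ := ha

variable {k}

/-- A morphism of `ℬ` from `(K, A)` to `(K, A')` (where `K = k((T))`): a continuous
`k`-embedding `σ : K → K` such that `K` is finite separable over `σ(K)`, `A'`
stabilizes `σ(K)`, and the image of `A'` in `Aut_k(K)` is an open subgroup of `A`. -/
structure BMor (b b' : BObj k) where
  /-- the underlying continuous `k`-embedding -/
  σ : (K k) →ₐ[k] (K k)
  cont : Continuous σ
  /-- `K` is finite over `σ(K)` -/
  fin : (σ : (K k) →+* (K k)).Finite
  /-- `K` is separable over `σ(K)` -/
  sep : @Algebra.IsSeparable (K k) (K k) _ _ (σ : (K k) →+* (K k)).toAlgebra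
  /-- `A'` stabilizes `σ(K)` -/
  stab : ∀ γ : b'.A, ∀ x : K k, ∃ y : K k, ((γ : AutK k) : (K k) ≃ₐ[k] (K k)) (σ x) = σ y
  /-- the image of `A'` in `Aut_k(K)` is contained in `A` ... -/
  image_le : {τ : AutK k | ∃ γ ∈ b'.A, ∀ x : K k,
      ((γ : (K k) ≃ₐ[k] (K k)) (σ x)) = σ ((τ : (K k) ≃ₐ[k] (K k)) x)} ⊆ (b.A : Set (AutK k))
  /-- ... and is an open subgroup of `A` -/
  image_open : IsOpen (Subtype.val ⁻¹' {τ : AutK k | ∃ γ ∈ b'.A, ∀ x : K k,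
      ((γ : (K k) ≃ₐ[k] (K k)) (σ x)) = σ ((τ : (K k) ≃ₐ[k] (K k)) x)} : Set b.A)

/-- A morphism of `𝒜` from `E/F` to `E'/F'`: a continuous embedding `ρ : E → E'`
inducing the identity on the residue field `k`, mapping `F` into `F'`, such that
`E'/ρ(E)` and `F'/ρ(F)` are finite separable extensions. -/
structure AMor {p : ℕ} (a a' : AObj p k) where
  /-- the underlying embedding `E → E'` -/
  ρ : a.E →+* a'.E
  /-- the restriction `F → F'` of `ρ` to the base fields -/
  ρF : a.F →+* a'.F
  square : ∀ x : a.F, ρ (algebraMap a.F a.E x) = algebraMap a'.F a'.E (ρF x)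
  /-- `ρ` is continuous -/
  cont : @Continuous _ _ (Valued.mk' a.valE).toUniformSpace.toTopologicalSpace
      (Valued.mk' a'.valE).toUniformSpace.toTopologicalSpace ρ
  /-- `E'` is finite over `ρ(E)` -/
  finE : ρ.Finite
  /-- `E'` is separable over `ρ(E)` -/
  sepE : @Algebra.IsSeparable a.E a'.E _ _ ρ.toAlgebra
  /-- `F'` is finite over `ρ(F)` -/
  finF : ρF.Finite
  /-- `F'` is separable over `ρ(F)` -/
  sepF : @Algebra.IsSeparable a.F a'.F _ _ ρF.toAlgebra
  /-- `ρ` induces the identity on the residue field `k` -/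
  resk : ∀ x : a.F, ∀ hx : a.base.val x ≤ 1, ∃ hx' : a'.base.val (ρF x) ≤ 1,
      a'.base.res (ρF x) hx' = a.base.res x hx

/-- `s` is the `ℬ`-morphism induced by the `𝒜`-morphism `ρ` under the field of norms
functor, i.e. `s = ℱ(ρ)`:  for all sufficiently large finite subextensions `L` of
`E/F` there is a finite subextension `L'` of `E'/F'` with `ρ(L) ⊆ L'` such that the
`L'`-component of `s(x)` is `ρ` applied to the `L`-component of `x`. -/
def Induces {p : ℕ} {a a' : AObj p k} (na : ANorm a) (na' : ANorm a')
    (ρ : AMor a a') (s : BMor (toBObj a na) (toBObj a' na')) : Prop :=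
  ∃ M₀ : IntermediateField a.F a.E, FiniteDimensional a.F M₀ ∧
    ∀ L : IntermediateField a.F a.E, FiniteDimensional a.F L → M₀ ≤ L →
      ∃ L' : IntermediateField a'.F a'.E, FiniteDimensional a'.F L' ∧
        (∀ z ∈ L, ρ.ρ z ∈ L') ∧
        ∀ x : K k, na'.comp (s.σ x) L' = ρ.ρ (na.comp x L)

/-- Ramification filtrations (in the lower and upper numbering) on the Galois group
of an object `E/F` of `𝒜`.  The filtration is pinned down by the `anchor` axiom:
via Herbrand's theorem, the image of `G[x]` in the Galois group of a finite
subextension `L/F` is the concretely defined ramification subgroup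
`Gal(L/F)[φ_{E/L}(x)] = {σ : v_L(σ(π_L) - π_L) ≥ φ_{E/L}(x) + 1}`, where
`φ_{E/L}(x) = ∫_0^x dt / [Gal(E/L)[0] : Gal(E/L)[t]]`.  The upper numbering is
obtained from the lower numbering via the Hasse–Herbrand function
`φ_{E/F}(x) = ∫_0^x dt / [G[0] : G[t]]`, i.e. `G(φ_{E/F}(x)) = G[x]`. -/
structure LowerRamData {p : ℕ} (a : AObj p k) where
  /-- the ramification subgroups `G[x]` in the lower numbering -/
  low : ℝ → Subgroup (a.E ≃ₐ[a.F] a.E)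
  /-- `G[0] = G` (the extension is totally ramified) -/
  low_zero : low 0 = ⊤
  /-- the filtration is decreasing -/
  mono : ∀ x y : ℝ, 0 ≤ x → x ≤ y → low y ≤ low x
  /-- each `G[x]` has finite index (the extension is arithmetically profinite) -/
  finiteIndex : ∀ x : ℝ, (low x).index ≠ 0
  /-- Herbrand compatibility with the concrete filtration at finite levels -/
  anchor : ∀ L : IntermediateField a.F a.E, FiniteDimensional a.F L →
      ∀ x : ℝ, 0 ≤ x → ∀ σ : a.E ≃ₐ[a.F] a.E,
      (σ ∈ low x ⊔ L.fixingSubgroup ↔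
        ∀ π : a.E, IsUnifOf a.valE L π →
          a.valE (σ π - π) ≤ (a.valE π) ^
            (⌈∫ t in (0:ℝ)..x,
                (((L.fixingSubgroup ⊓ low t).relIndex L.fixingSubgroup : ℝ))⁻¹⌉ + 1))
  /-- the ramification subgroups `G(u)` in the upper numbering -/
  upr : ℝ → Subgroup (a.E ≃ₐ[a.F] a.E)
  /-- `G(φ_{E/F}(x)) = G[x]` -/
  upr_low : ∀ x : ℝ, 0 ≤ x →
      upr (∫ t in (0:ℝ)..x, (((low t).index : ℝ))⁻¹) = low x

/-- The subgroup `A` of `Aut_k(K)` is topologically finitely generated. -/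
def TopFG (b : BObj k) : Prop :=
  ∃ S : Finset (AutK k),
    (b.A : Set (AutK k)) ⊆ _root_.closure ((Subgroup.closure (S : Set (AutK k)) : Subgroup (AutK k)) : Set (AutK k))


-- helpers
lemma zToQ_coe (a : ℤ) : zToQ ((Multiplicative.ofAdd a : Multiplicative ℤ) : Zm0)
    = ((Multiplicative.ofAdd (a : ℚ) : Multiplicative ℚ) : Qm0) := by
  rfl

lemma zToQ_ne_zero {x : Zm0} (hx : x ≠ 0) : zToQ x ≠ 0 := by
  obtain ⟨a, rfl⟩ := WithZero.ne_zero_iff_exists.mp hx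
  exact WithZero.coe_ne_zero

lemma multiset_exists_min {α β : Type*} [LinearOrder β] (f : α → β) {s : Multiset α}
    (hs : s ≠ 0) : ∃ a ∈ s, ∀ b ∈ s, f a ≤ f b := by
  induction s using Multiset.induction with
  | empty => exact absurd rfl hs
  | cons a s ih =>
    rcases eq_or_ne s 0 with rfl | hs0
    · exact ⟨a, Multiset.mem_cons_self a 0, by simp⟩
    · obtain ⟨b, hb, hbmin⟩ := ih hs0
      rcases le_total (f a) (f b) with h | h
      · exact ⟨a, Multiset.mem_cons_self a s, by
          intro c hc
          rcases Multiset.mem_cons.mp hc with rfl | hc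
          · exact le_rfl
          · exact h.trans (hbmin c hc)⟩
      · exact ⟨b, Multiset.mem_cons_of_mem hb, by
          intro c hc
          rcases Multiset.mem_cons.mp hc with rfl | hc
          · exact h
          · exact hbmin c hc⟩



lemma qm0_pow_small {a : Qm0} (ha : a < 1) (γ : Qm0ˣ) :
    ∃ N : ℕ, ∀ n ≥ N, a ^ n < (γ : Qm0) := by
  have hγ0 : (0 : Qm0) < (γ : Qm0) := Units.zero_lt γ
  rcases eq_or_ne a 0 with rfl | ha0
  · exact ⟨1, fun n hn => by rw [zero_pow (by omega)]; exact hγ0⟩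
  · obtain ⟨m, rfl⟩ := WithZero.ne_zero_iff_exists.mp ha0
    obtain ⟨b, hb⟩ := WithZero.ne_zero_iff_exists.mp (γ.ne_zero)
    set q : ℚ := Multiplicative.toAdd m with hq
    set r : ℚ := Multiplicative.toAdd b with hr
    have hqneg : q < 0 := by
      have := ha
      rw [← WithZero.coe_one, WithZero.coe_lt_coe] at this
      exact Multiplicative.toAdd_lt.mpr this -- check
    obtain ⟨N, hN⟩ := exists_nat_gt (r / q)
    refine ⟨N, fun n hn => ?_⟩
    rw [← hb, ← WithZero.coe_pow, WithZero.coe_lt_coe]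
    have h1 : (n : ℚ) * q < r := by
      have hnN : (r / q) < (n : ℚ) := lt_of_lt_of_le hN (by exact_mod_cast hn)
      have h2 := mul_lt_mul_of_neg_right hnN hqneg
      rwa [div_mul_cancel₀ r (ne_of_lt hqneg)] at h2
    have : Multiplicative.toAdd (m ^ n) < Multiplicative.toAdd b := by
      rw [toAdd_pow]
      simpa [hq, hr, nsmul_eq_mul] using h1
    exact this -- needs toAdd_lt


def rankOne {F : Type} [Field F] (S : CDVF F) : Valuation.RankOne S.val where
  hom' := (WithZeroMulInt.toNNReal (by norm_num : (2 : NNReal) ≠ 0)).comp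
    MonoidWithZeroHom.ValueGroup₀.embedding
  strictMono' := (WithZeroMulInt.toNNReal_strictMono (by norm_num : (1 : NNReal) < 2)).comp
    MonoidWithZeroHom.ValueGroup₀.embedding_strictMono
  exists_val_nontrivial := by
    obtain ⟨x, hx⟩ := S.isDiscrete ((Multiplicative.ofAdd (1 : ℤ) : Multiplicative ℤ) : Zm0)
    refine ⟨x, ?_, ?_⟩
    · rw [hx]; exact WithZero.coe_ne_zero
    · rw [hx, ← WithZero.coe_one, Ne, WithZero.coe_inj]
      decide

lemma valued_pow_tendsto {L : Type} [Field L] (w : Valuation L Qm0) {x : L} (hx : w x < 1) :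
    Filter.Tendsto (fun n : ℕ => x ^ n) Filter.atTop
      (@nhds L (Valued.mk' w).toUniformSpace.toTopologicalSpace 0) := by
  letI : Valued L Qm0 := Valued.mk' w
  rw [(Valued.hasBasis_nhds_zero L Qm0).tendsto_right_iff]
  intro γ _
  obtain ⟨N, hN⟩ := qm0_pow_small hx
    (Units.map (MonoidWithZeroHom.ValueGroup₀.embedding (f := MonoidWithZeroHom.ofClass
      (Valued.v : Valuation L Qm0))).toMonoidHom γ)
  filter_upwards [Filter.eventually_ge_atTop N] with n hn
  show (Valued.v : Valuation L Qm0).restrict (x ^ n) < γ.1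
  rw [Valuation.restrict_lt_iff_lt_embedding, map_pow]
  exact hN n hn

lemma valued_lt_one_of_pow_tendsto {L : Type} [Field L] (w : Valuation L Qm0) {x : L}
    (hx : Filter.Tendsto (fun n : ℕ => x ^ n) Filter.atTop
      (@nhds L (Valued.mk' w).toUniformSpace.toTopologicalSpace 0)) : w x < 1 := by
  letI : Valued L Qm0 := Valued.mk' w
  by_contra h
  push_neg at h
  have h1 : {y : L | Valued.v y < (1 : Qm0)} ∈ @nhds L _ (0 : L) := by
    have := (Valued.hasBasis_nhds_zero L Qm0).mem_of_mem (i := 1) trivial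
    simpa using this
  obtain ⟨n, hn⟩ := (hx.eventually_mem h1).exists
  have : (1 : Qm0) ≤ Valued.v (x ^ n) := by
    rw [map_pow]
    exact one_le_pow_of_one_le' h n
  exact (not_lt.mpr this) hn



lemma valued_topAddGroup {L : Type} [Field L] (w : Valuation L Qm0) :
    @IsTopologicalAddGroup L (Valued.mk' w).toUniformSpace.toTopologicalSpace _ := by
  letI : Valued L Qm0 := Valued.mk' w
  exact inferInstance

lemma valued_t2 {L : Type} [Field L] (w : Valuation L Qm0) :
    @T2Space L (Valued.mk' w).toUniformSpace.toTopologicalSpace := by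
  letI : Valued L Qm0 := Valued.mk' w
  exact inferInstance

lemma valued_continuousSMul {F L : Type} [Field F] [Field L] [Algebra F L] (S : CDVF F)
    (w : Valuation L Qm0) (h : ∀ c : F, w (algebraMap F L c) = zToQ (S.val c)) :
    @ContinuousSMul F L _ (Valued.mk' S.val).toUniformSpace.toTopologicalSpace
      (Valued.mk' w).toUniformSpace.toTopologicalSpace := by
  letI : Valued F Zm0 := Valued.mk' S.val
  letI : Valued L Qm0 := Valued.mk' w
  have halg : Continuous (algebraMap F L) := by
    apply continuous_of_continuousAt_zero (algebraMap F L)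
    unfold ContinuousAt
    rw [map_zero]
    rw [(Valued.hasBasis_nhds_zero F Zm0).tendsto_iff (Valued.hasBasis_nhds_zero L Qm0)]
    intro γ₁ _
    set γ : Qm0ˣ := Units.map (MonoidWithZeroHom.ValueGroup₀.embedding (f := MonoidWithZeroHom.ofClass
      (Valued.v : Valuation L Qm0))).toMonoidHom γ₁ with hγdef
    obtain ⟨b, hb⟩ := WithZero.ne_zero_iff_exists.mp γ.ne_zero
    set r : ℚ := Multiplicative.toAdd b with hr
    obtain ⟨c0, hc0⟩ := S.isDiscrete ((Multiplicative.ofAdd ⌊r⌋ : Multiplicative ℤ) : Zm0)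
    have hc00 : (Valued.v : Valuation F Zm0).restrict c0 ≠ 0 := by
      rw [Ne, Valuation.restrict_eq_zero_iff]
      show S.val c0 ≠ 0
      rw [hc0]; exact WithZero.coe_ne_zero
    refine ⟨Units.mk0 _ hc00, trivial, ?_⟩
    intro c hc
    rw [Set.mem_setOf_eq, Valuation.restrict_lt_iff_lt_embedding]
    show w (algebraMap F L c) < (γ : Qm0)
    rcases eq_or_ne (S.val c) 0 with h0 | h0
    · rw [h c, h0, map_zero]
      exact Units.zero_lt γ
    · obtain ⟨a, ha⟩ := WithZero.ne_zero_iff_exists.mp h0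
      rw [h c, ← ha, ← ofAdd_toAdd a, zToQ_coe, ← hb, ← ofAdd_toAdd b, WithZero.coe_lt_coe]
      apply Multiplicative.ofAdd_lt.mpr
      have hlt : Multiplicative.toAdd a < ⌊r⌋ := by
        have h2 : S.val c < ((Multiplicative.ofAdd ⌊r⌋ : Multiplicative ℤ) : Zm0) := by
          rw [← hc0]; exact (Valuation.restrict_lt_iff _).mp hc
        rw [← ha, WithZero.coe_lt_coe, ← ofAdd_toAdd a] at h2
        exact Multiplicative.ofAdd_lt.mp h2
      have : ((Multiplicative.toAdd a : ℤ) : ℚ) < r := by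
        calc ((Multiplicative.toAdd a : ℤ) : ℚ) ≤ (⌊r⌋ : ℚ) - 1 := by
              have : Multiplicative.toAdd a ≤ ⌊r⌋ - 1 := by omega
              exact_mod_cast this
          _ < (⌊r⌋ : ℚ) := by linarith
          _ ≤ r := Int.floor_le r
      exact this
  have hmul : Continuous (fun p : F × L => algebraMap F L p.1 * p.2) :=
    (halg.comp continuous_fst).mul continuous_snd
  refine ⟨?_⟩
  simpa only [Algebra.smul_def] using hmul



lemma lt_one_mono {F L : Type} [Field F] [Field L] [Algebra F L] [FiniteDimensional F L]
    (S : CDVF F) (u1 u2 : Valuation L Qm0)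
    (g1 : ∀ c : F, u1 (algebraMap F L c) = zToQ (S.val c))
    (g2 : ∀ c : F, u2 (algebraMap F L c) = zToQ (S.val c))
    {x : L} (hx : u1 x < 1) : u2 x < 1 := by
  letI : Valued F Zm0 := Valued.mk' S.val
  letI : Valuation.RankOne (Valued.v : Valuation F Zm0) := rankOne S
  letI : NontriviallyNormedField F := Valued.toNontriviallyNormedField F Zm0
  haveI : CompleteSpace F := S.complete
  set t1 : TopologicalSpace L := (Valued.mk' u1).toUniformSpace.toTopologicalSpace with ht1
  set t2 : TopologicalSpace L := (Valued.mk' u2).toUniformSpace.toTopologicalSpace with ht2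
  have hcont : @Continuous L L t1 t2 id := by
    have h0 := @LinearMap.continuous_of_finiteDimensional F _ L _ _ t1 (valued_topAddGroup u1)
      (valued_continuousSMul S u1 g1) L _ _ t2 (valued_topAddGroup u2)
      (valued_continuousSMul S u2 g2) _ (valued_t2 u1) _
      (LinearMap.id : L →ₗ[F] L)
    rwa [LinearMap.id_coe] at h0
  have hx' := valued_pow_tendsto u1 hx
  have hx2 : Filter.Tendsto (fun n : ℕ => x ^ n) Filter.atTop (@nhds L t2 0) := by
    have := (@Continuous.tendsto L L t1 t2 id hcont 0).comp hx'
    simpa using this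
  exact valued_lt_one_of_pow_tendsto u2 hx2

lemma val_eq_of_compat {F L : Type} [Field F] [Field L] [Algebra F L] [FiniteDimensional F L]
    (S : CDVF F) (w1 w2 : Valuation L Qm0)
    (h1 : ∀ c : F, w1 (algebraMap F L c) = zToQ (S.val c))
    (h2 : ∀ c : F, w2 (algebraMap F L c) = zToQ (S.val c)) (x : L) : w1 x = w2 x := by
  have hequiv : w1.IsEquiv w2 := by
    rw [Valuation.isEquiv_iff_val_lt_one]
    exact fun {y} => ⟨fun h => lt_one_mono S w1 w2 h1 h2 h, fun h => lt_one_mono S w2 w1 h2 h1 h⟩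
  rcases eq_or_ne x 0 with rfl | hx0
  · simp
  have key : ∀ u1 u2 : Valuation L Qm0, u1.IsEquiv u2 →
      (∀ c : F, u1 (algebraMap F L c) = zToQ (S.val c)) →
      (∀ c : F, u2 (algebraMap F L c) = zToQ (S.val c)) → ¬ u1 x < u2 x := by
    intro u1 u2 hE hg1 hg2 hlt
    obtain ⟨m1, hm1⟩ := WithZero.ne_zero_iff_exists.mp ((Valuation.ne_zero_iff u1).mpr hx0)
    obtain ⟨m2, hm2⟩ := WithZero.ne_zero_iff_exists.mp ((Valuation.ne_zero_iff u2).mpr hx0)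
    set q1 : ℚ := Multiplicative.toAdd m1
    set q2 : ℚ := Multiplicative.toAdd m2
    have hq : q1 < q2 := by
      rw [← hm1, ← hm2, ← ofAdd_toAdd m1, ← ofAdd_toAdd m2, WithZero.coe_lt_coe] at hlt
      exact Multiplicative.ofAdd_lt.mp hlt
    set r : ℚ := (q1 + q2) / 2 with hrdef
    have hr1 : q1 < r := by rw [hrdef]; linarith
    have hr2 : r < q2 := by rw [hrdef]; linarith
    set m : ℕ := r.den with hmdef
    set k : ℤ := r.num with hkdef
    have hm0 : 0 < (m : ℚ) := by exact_mod_cast r.pos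
    have hrk : r * m = k := by
      have h3 : ((k : ℚ)) / (m : ℚ) = r := by
        rw [hkdef, hmdef]; exact_mod_cast Rat.num_div_den r
      rw [← h3, div_mul_cancel₀ _ (ne_of_gt hm0)]
    have hk1 : q1 * m < (k : ℚ) := by rw [← hrk]; exact mul_lt_mul_of_pos_right hr1 hm0
    have hk2 : (k : ℚ) < q2 * m := by rw [← hrk]; exact mul_lt_mul_of_pos_right hr2 hm0
    obtain ⟨c, hc⟩ := S.isDiscrete ((Multiplicative.ofAdd k : Multiplicative ℤ) : Zm0)
    have hcQ1 : u1 (algebraMap F L c) = ((Multiplicative.ofAdd (k : ℚ) : Multiplicative ℚ) : Qm0) := by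
      rw [hg1 c, hc, zToQ_coe]
    have hcQ2 : u2 (algebraMap F L c) = ((Multiplicative.ofAdd (k : ℚ) : Multiplicative ℚ) : Qm0) := by
      rw [hg2 c, hc, zToQ_coe]
    have hpow1 : u1 (x ^ m) = ((Multiplicative.ofAdd (q1 * m) : Multiplicative ℚ) : Qm0) := by
      rw [map_pow, ← hm1, ← WithZero.coe_pow, WithZero.coe_inj, ← ofAdd_toAdd (m1 ^ m),
        toAdd_pow, nsmul_eq_mul]
      rw [mul_comm]
    have hpow2 : u2 (x ^ m) = ((Multiplicative.ofAdd (q2 * m) : Multiplicative ℚ) : Qm0) := by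
      rw [map_pow, ← hm2, ← WithZero.coe_pow, WithZero.coe_inj, ← ofAdd_toAdd (m2 ^ m),
        toAdd_pow, nsmul_eq_mul]
      rw [mul_comm]
    have hstep1 : u1 (x ^ m) < u1 (algebraMap F L c) := by
      rw [hpow1, hcQ1, WithZero.coe_lt_coe]
      exact Multiplicative.ofAdd_lt.mpr hk1
    have hstep2 : u2 (x ^ m) < u2 (algebraMap F L c) := by
      have := (not_iff_not.mpr (hE (algebraMap F L c) (x ^ m))).mp (not_le.mpr hstep1)
      exact not_le.mp this
    rw [hpow2, hcQ2, WithZero.coe_lt_coe] at hstep2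
    have := Multiplicative.ofAdd_lt.mp hstep2
    linarith
  rcases lt_trichotomy (w1 x) (w2 x) with h | h | h
  · exact absurd h (key w1 w2 hequiv h1 h2)
  · exact h
  · exact absurd h (key w2 w1 hequiv.symm h2 h1)



open IntermediateField in
lemma w_invariant {F : Type} [Field F] (S : CDVF F)
    (w : Valuation (AlgebraicClosure F) Qm0)
    (hw : ∀ x : F, w (algebraMap F (AlgebraicClosure F) x) = zToQ (S.val x))
    (σ : AlgebraicClosure F ≃ₐ[F] AlgebraicClosure F) (z : AlgebraicClosure F) :
    w (σ z) = w z := by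
  set L : IntermediateField F (AlgebraicClosure F) := F⟮z⟯ with hL
  haveI : FiniteDimensional F L :=
    IntermediateField.adjoin.finiteDimensional
      (IsAlgebraic.isIntegral (Algebra.IsAlgebraic.isAlgebraic z))
  set w1 : Valuation L Qm0 := w.comap (L.val : L →ₐ[F] (AlgebraicClosure F)).toRingHom with hw1
  set w2 : Valuation L Qm0 := w.comap ((σ.toAlgHom.comp (L.val : L →ₐ[F] (AlgebraicClosure F))) : L →ₐ[F] (AlgebraicClosure F)).toRingHom
    with hw2
  have h1 : ∀ c : F, w1 (algebraMap F L c) = zToQ (S.val c) := by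
    intro c
    have : (L.val : L →ₐ[F] (AlgebraicClosure F)) (algebraMap F L c) = algebraMap F (AlgebraicClosure F) c := AlgHom.commutes _ c
    simp only [hw1, Valuation.comap_apply]
    rw [show ((L.val : L →ₐ[F] (AlgebraicClosure F)).toRingHom (algebraMap F L c)) = algebraMap F (AlgebraicClosure F) c from this]
    exact hw c
  have h2 : ∀ c : F, w2 (algebraMap F L c) = zToQ (S.val c) := by
    intro c
    simp only [hw2, Valuation.comap_apply]
    rw [show ((σ.toAlgHom.comp (L.val : L →ₐ[F] (AlgebraicClosure F))).toRingHom (algebraMap F L c))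
        = algebraMap F (AlgebraicClosure F) c from AlgHom.commutes _ c]
    exact hw c
  have hgen := val_eq_of_compat S w1 w2 h1 h2 (IntermediateField.AdjoinSimple.gen F z)
  simp only [hw1, hw2, Valuation.comap_apply] at hgen
  have hg : (L.val : L →ₐ[F] (AlgebraicClosure F)) (IntermediateField.AdjoinSimple.gen F z) = z :=
    IntermediateField.AdjoinSimple.algebraMap_gen F z
  rw [show ((L.val : L →ₐ[F] (AlgebraicClosure F)).toRingHom (IntermediateField.AdjoinSimple.gen F z)) = z from hg]
    at hgen
  rw [show ((σ.toAlgHom.comp (L.val : L →ₐ[F] (AlgebraicClosure F))).toRingHom (IntermediateField.AdjoinSimple.gen F z))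
      = σ z from by simp [hg]] at hgen
  exact hgen.symm




/-- **Lemma 3.3.**  Let `F` be a complete discretely valued field, `g ∈ O_F[T]` a
separable monic Eisenstein polynomial, `α` a root of `g` (generating `E = F(α)`),
and `d = v_E(g'(α))` the `E`-valuation of the different of `E/F`.  If `π` satisfies
`v_E(g(π)) > d`, then `g` has a root `β` with `v_E(π - β) ≥ v_E(g(π)) - d`.

Here `w` is the unique extension to the algebraic closure of the valuation of `F`;
the additive inequalities `v_E(g(π)) > d` and `v_E(π - β) ≥ v_E(g(π)) - d` are
scale-invariant and are expressed multiplicatively as `w(g(π)) < w(g'(α))` and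
`w(π - β) · w(g'(α)) ≤ w(g(π))`. -/
theorem statement_12
    (F : Type) [Field F] (S : CDVF F)
    (w : Valuation (AlgebraicClosure F) Qm0)
    (hw : ∀ x : F, w (algebraMap F (AlgebraicClosure F) x) = zToQ (S.val x))
    (g : Polynomial S.val.valuationSubring) (hmon : g.Monic)
    (heis : g.IsEisensteinAt (IsLocalRing.maximalIdeal S.val.valuationSubring))
    (hsep : (g.map (algebraMap S.val.valuationSubring F)).Separable)
    (α : AlgebraicClosure F)
    (hα : Polynomial.aeval α (g.map (algebraMap S.val.valuationSubring F)) = 0)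
    (π : AlgebraicClosure F)
    (hπ : w (Polynomial.aeval π (g.map (algebraMap S.val.valuationSubring F)))
        < w (Polynomial.aeval α
            (Polynomial.derivative (g.map (algebraMap S.val.valuationSubring F))))) :
    ∃ β : AlgebraicClosure F,
      Polynomial.aeval β (g.map (algebraMap S.val.valuationSubring F)) = 0 ∧
      w (π - β) * w (Polynomial.aeval α
          (Polynomial.derivative (g.map (algebraMap S.val.valuationSubring F))))
        ≤ w (Polynomial.aeval π (g.map (algebraMap S.val.valuationSubring F))) := by
  classical
  set G : Polynomial F := g.map (algebraMap S.val.valuationSubring F) with hG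
  set GA : Polynomial (AlgebraicClosure F) := G.map (algebraMap F (AlgebraicClosure F)) with hGA
  have hGm : G.Monic := by rw [hG]; exact hmon.map _
  have hGAm : GA.Monic := by rw [hGA]; exact hGm.map _
  -- aeval facts
  have haev : ∀ y : AlgebraicClosure F, Polynomial.aeval y G = GA.eval y := by
    intro y
    rw [hGA, Polynomial.eval_map, Polynomial.aeval_def]
  have hgd : 0 < g.natDegree := by
    by_contra h
    have h0 : g.natDegree = 0 := by omega
    have h1 : g = 1 := (Polynomial.Monic.natDegree_eq_zero hmon).mp h0
    have h2 : G = 1 := by rw [hG, h1, Polynomial.map_one]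
    rw [h2] at hα
    simp at hα
  -- irreducibility
  haveI : IsIntegrallyClosed S.val.valuationSubring :=
    Valuation.Integers.isIntegrallyClosed (v := S.val) (Valuation.integer.integers S.val)
  have hgirr : Irreducible g :=
    heis.irreducible (IsLocalRing.maximalIdeal.isMaximal S.val.valuationSubring).isPrime hmon.isPrimitive hgd
  have hGirr : Irreducible G :=
    (Polynomial.Monic.irreducible_iff_irreducible_map_fraction_map hmon).mp hgirr
  -- roots
  have hGAsplits : GA.Splits := IsAlgClosed.splits GA
  set R : Multiset (AlgebraicClosure F) := GA.roots with hR
  have hprod : GA = (R.map fun r => Polynomial.X - Polynomial.C r).prod :=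
    hGAsplits.eq_prod_roots_of_monic hGAm
  have hαroot : α ∈ R := by
    rw [hR, Polynomial.mem_roots hGAm.ne_zero]
    show GA.eval α = 0
    rw [← haev α]
    exact hα
  have evalprod : ∀ y : AlgebraicClosure F, GA.eval y = (R.map fun r => y - r).prod := by
    intro y
    conv_lhs => rw [hprod]
    rw [Polynomial.eval_multiset_prod, Multiset.map_map]
    congr 1
    apply Multiset.map_congr rfl
    intro r _
    simp
  have hwP : w (Polynomial.aeval π G) = (R.map fun r => w (π - r)).prod := by
    rw [haev, evalprod, map_multiset_prod, Multiset.map_map]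
    rfl
  -- derivative
  set T : Polynomial (AlgebraicClosure F) :=
    ((R.erase α).map fun r => Polynomial.X - Polynomial.C r).prod with hT
  have hfac : GA = (Polynomial.X - Polynomial.C α) * T := by
    rw [hprod, ← Multiset.prod_map_erase (f := fun r => Polynomial.X - Polynomial.C r) hαroot]
  have hDer : w (Polynomial.aeval α (Polynomial.derivative G))
      = ((R.erase α).map fun r => w (α - r)).prod := by
    have h1 : Polynomial.aeval α (Polynomial.derivative G)
        = (Polynomial.derivative GA).eval α := by
      simp only [Polynomial.aeval_def, Polynomial.eval₂_eq_eval_map, hGA, Polynomial.derivative_map]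
    have h2 : (Polynomial.derivative GA).eval α = T.eval α := by
      rw [hfac, Polynomial.derivative_mul]
      simp
    have h3 : T.eval α = ((R.erase α).map fun r => α - r).prod := by
      rw [hT, Polynomial.eval_multiset_prod, Multiset.map_map]
      congr 1
      apply Multiset.map_congr rfl
      intro r _
      simp
    rw [h1, h2, h3, map_multiset_prod, Multiset.map_map]
    rfl
  -- choose closest root
  have hRne : R ≠ 0 := by
    intro h0
    rw [h0] at hαroot
    exact Multiset.notMem_zero α hαroot
  obtain ⟨β, hβR, hβmin⟩ := multiset_exists_min (fun r => w (π - r)) hRne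
  have hβaev : Polynomial.aeval β G = 0 := by
    rw [haev]
    exact (Polynomial.mem_roots hGAm.ne_zero).mp hβR
  -- Galois conjugation
  have hminp : minpoly F α = G :=
    (minpoly.eq_of_irreducible_of_monic hGirr hα hGm).symm
  obtain ⟨σ, hσ⟩ := minpoly.exists_algEquiv_of_root'
    (Algebra.IsAlgebraic.isAlgebraic (R := F) α) (by rw [hminp]; exact hβaev)
  -- roots stable under σ
  have hcomp : (σ.toAlgHom.toRingHom).comp (algebraMap F (AlgebraicClosure F))
      = algebraMap F (AlgebraicClosure F) := by
    ext c
    exact σ.commutes c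
  have hGAσ : GA.map σ.toAlgHom.toRingHom = GA := by
    rw [hGA, Polynomial.map_map, hcomp]
  have hRσ : R.map (fun r => σ r) = R := by
    have := hGAsplits.roots_map σ.toAlgHom.toRingHom
    rw [hGAσ] at this
    rw [hR]
    exact this.symm
  have hErase : (R.erase α).map (fun r => σ r) = R.erase β := by
    rw [Multiset.map_erase _ (fun a b hab => σ.injective hab) α R, hRσ, hσ]
  -- equality of differents
  have hDD : ((R.erase β).map fun r => w (β - r)).prod
      = ((R.erase α).map fun r => w (α - r)).prod := by
    rw [← hErase, Multiset.map_map]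
    congr 1
    apply Multiset.map_congr rfl
    intro r _
    show w (β - σ r) = w (α - r)
    rw [← hσ, ← map_sub σ]
    exact w_invariant S w hw σ (α - r)
  -- termwise bound
  have hterm : ∀ r ∈ R.erase β, w (β - r) ≤ w (π - r) := by
    intro r hr
    have h1 : w (π - β) ≤ w (π - r) := hβmin r (Multiset.mem_of_mem_erase hr)
    have h2 : w (β - r) ≤ max (w (β - π)) (w (π - r)) := by
      have : β - r = (β - π) + (π - r) := by ring
      rw [this]
      exact w.map_add _ _
    rw [w.map_sub_swap β π] at h2
    exact h2.trans (max_le h1 le_rfl)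
  have hprodle : ((R.erase β).map fun r => w (β - r)).prod
      ≤ ((R.erase β).map fun r => w (π - r)).prod :=
    Multiset.prod_map_le_prod_map _ _ hterm
  refine ⟨β, hβaev, ?_⟩
  rw [hDer, hwP, ← Multiset.prod_map_erase (f := fun r => w (π - r)) hβR, ← hDD]
  exact mul_le_mul_right hprodle _



end FieldOfNormsPaper
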